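/- arXiv:2002.08605 — 4 statements merged into one kernel-verified Lean document; each statement's English description precedes it below -/
import Mathlib

section
/- Let U ⊆ ℝ^K be the set {u | ∃ θ, ℓ(θ) ≤ u coordinatewise} for convex functions ℓ_k, let ũ ∈ ℝ^K, let θ⁺ minimize θ ↦ ½‖(ℓ(θ) − ũ)₊‖², and define u⁺ by u⁺_k = max(ũ_k, ℓ_k(θ⁺)). Then u⁺ is the Euclidean projection of ũ onto U, i.e., u⁺ ∈ U and u⁺ minimizes ‖u − ũ‖² over u ∈ U. -/
lemma norm_sq_eucl {K : ℕ} (v : EuclideanSpace ℝ (Fin K)) :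
    ‖v‖ ^ 2 = ∑ k, (v k) ^ 2 := by
  rw [EuclideanSpace.norm_eq, Real.sq_sqrt (by positivity)]
  simp [Real.norm_eq_abs, sq_abs]

/-- If `θ⁺` minimizes `θ ↦ ½‖(ℓ(θ) − ũ)₊‖²` and `u⁺_k = max(ũ_k, ℓ_k(θ⁺))`,
then `u⁺` is the Euclidean projection of `ũ` onto `U = {u | ∃ θ, ℓ(θ) ≤ u}`:
`u⁺ ∈ U` and `u⁺` minimizes `‖u − ũ‖²` over `u ∈ U`. -/
theorem exact_projection_characterization {d K : ℕ}
    (ℓ : Fin K → EuclideanSpace ℝ (Fin d) → ℝ)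
    (hconv : ∀ k, ConvexOn ℝ Set.univ (ℓ k))
    (hdiff : ∀ k, Differentiable ℝ (ℓ k))
    (utld : EuclideanSpace ℝ (Fin K))
    (θp : EuclideanSpace ℝ (Fin d))
    (hmin : ∀ θ, (1/2) * ∑ k, (max (ℓ k θp - utld k) 0) ^ 2 ≤
                 (1/2) * ∑ k, (max (ℓ k θ - utld k) 0) ^ 2)
    (up : EuclideanSpace ℝ (Fin K))
    (hup : ∀ k, up k = max (utld k) (ℓ k θp)) :
    (∃ θ, ∀ k, ℓ k θ ≤ up k) ∧
      ∀ u : EuclideanSpace ℝ (Fin K), (∃ θ, ∀ k, ℓ k θ ≤ u k) →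
        ‖up - utld‖ ^ 2 ≤ ‖u - utld‖ ^ 2 := by
  constructor
  · exact ⟨θp, fun k => (hup k) ▸ le_max_right _ _⟩
  · rintro u ⟨θ, hθ⟩
    have hup2 : ‖up - utld‖ ^ 2 = ∑ k, (max (ℓ k θp - utld k) 0) ^ 2 := by
      rw [norm_sq_eucl]
      apply Finset.sum_congr rfl
      intro k _
      have : (up - utld) k = up k - utld k := by
        simp
      rw [this, hup k]
      rcases le_total (utld k) (ℓ k θp) with h | h
      · rw [max_eq_right h, max_eq_left (by linarith)]
      · rw [max_eq_left h, max_eq_right (by linarith)]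
        ring
    rw [hup2, norm_sq_eucl]
    have h1 : ∑ k, (max (ℓ k θp - utld k) 0) ^ 2 ≤
        ∑ k, (max (ℓ k θ - utld k) 0) ^ 2 := by
      have := hmin θ
      linarith
    refine h1.trans (Finset.sum_le_sum fun k _ => ?_)
    have : (u - utld) k = u k - utld k := by simp
    rw [this]
    have hle : max (ℓ k θ - utld k) 0 ≤ |u k - utld k| := by
      rcases le_total (ℓ k θ - utld k) 0 with h | h
      · rw [max_eq_right h]; positivity
      · rw [max_eq_left h]
        exact le_trans (by linarith [hθ k]) (le_abs_self _)
    calc (max (ℓ k θ - utld k) 0) ^ 2 ≤ |u k - utld k| ^ 2 :=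
          pow_le_pow_left₀ (le_max_right _ _) hle 2
      _ = (u k - utld k) ^ 2 := sq_abs _
end

section
/- Let ψ : ℝ^K → ℝ be monotone nondecreasing in each coordinate (u ≤ v coordinatewise implies ψ(u) ≤ ψ(v)). Let u⁺ be the Euclidean projection of ũ ∈ ℝ^K onto the convex set U = {u | ∃ θ, ℓ(θ) ≤ u}, and let θ' be any minimizer of θ ↦ ‖(ℓ(θ) − ũ)₊‖² with u' = ℓ(θ'). Then u' ∈ U, u' ≤ u⁺ coordinatewise, and ψ(u') ≤ ψ(u⁺). -/
private lemma eucl_norm_sq {K : ℕ} (x : EuclideanSpace ℝ (Fin K)) :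
    ‖x‖ ^ 2 = ∑ k, x k ^ 2 := by
  rw [EuclideanSpace.norm_eq, Real.sq_sqrt (by positivity)]
  simp [Real.norm_eq_abs, sq_abs]

/-- Lemma 1, over-constrained projection: for monotone `ψ`, the exact
projection `u⁺` of `ũ` onto `U = {u | ∃ θ, ℓ(θ) ≤ u}`, and any minimizer `θ'` of
`θ ↦ ‖(ℓ(θ) − ũ)₊‖²` with `u' = ℓ(θ')`, one has `u' ∈ U`, `u' ≤ u⁺` coordinatewise,
and `ψ(u') ≤ ψ(u⁺)`. -/
theorem overconstrained_projection {d K : ℕ}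
    (ℓ : Fin K → EuclideanSpace ℝ (Fin d) → ℝ)
    (hconv : ∀ k, ConvexOn ℝ Set.univ (ℓ k))
    (hdiff : ∀ k, Differentiable ℝ (ℓ k))
    (ψ : EuclideanSpace ℝ (Fin K) → ℝ)
    (hmono : ∀ u v : EuclideanSpace ℝ (Fin K), (∀ k, u k ≤ v k) → ψ u ≤ ψ v)
    (utld up : EuclideanSpace ℝ (Fin K))
    (hupU : ∃ θ, ∀ k, ℓ k θ ≤ up k)
    (hproj : ∀ u : EuclideanSpace ℝ (Fin K), (∃ θ, ∀ k, ℓ k θ ≤ u k) →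
      ‖up - utld‖ ≤ ‖u - utld‖)
    (θ' : EuclideanSpace ℝ (Fin d))
    (hmin : ∀ θ, ∑ k, (max (ℓ k θ' - utld k) 0) ^ 2 ≤
                 ∑ k, (max (ℓ k θ - utld k) 0) ^ 2)
    (u' : EuclideanSpace ℝ (Fin K)) (hu' : ∀ k, u' k = ℓ k θ') :
    (∃ θ, ∀ k, ℓ k θ ≤ u' k) ∧ (∀ k, u' k ≤ up k) ∧ ψ u' ≤ ψ up := by
  obtain ⟨θ₀, hθ₀⟩ := hupU
  -- the surrogate point v = max(ℓ(θ'), ũ)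
  set v : EuclideanSpace ℝ (Fin K) := WithLp.toLp 2 (fun k => max (ℓ k θ') (utld k)) with hv
  have hvk : ∀ k, v k = max (ℓ k θ') (utld k) := fun k => rfl
  have hvU : ∃ θ, ∀ k, ℓ k θ ≤ v k := ⟨θ', fun k => le_max_left _ _⟩
  -- ‖v − ũ‖² equals the minimized objective
  have hvnorm : ‖v - utld‖ ^ 2 = ∑ k, (max (ℓ k θ' - utld k) 0) ^ 2 := by
    rw [eucl_norm_sq]
    refine Finset.sum_congr rfl fun k _ => ?_
    have h : (v - utld) k = max (ℓ k θ' - utld k) 0 := by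
      have h0 : (v - utld) k = v k - utld k := rfl
      rw [h0, hvk k, ← max_sub_sub_right, sub_self]
    rw [h]
  -- objective at θ₀ is at most ‖up − ũ‖²
  have h2 : ∑ k, (max (ℓ k θ₀ - utld k) 0) ^ 2 ≤ ‖up - utld‖ ^ 2 := by
    rw [eucl_norm_sq]
    refine Finset.sum_le_sum fun k _ => ?_
    have h1 : max (ℓ k θ₀ - utld k) 0 ≤ |up k - utld k| := by
      rcases le_total (ℓ k θ₀ - utld k) 0 with h | h
      · simp [max_eq_right h, abs_nonneg]
      · rw [max_eq_left h]
        exact le_trans (by linarith [hθ₀ k]) (le_abs_self _)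
    calc max (ℓ k θ₀ - utld k) 0 ^ 2 ≤ |up k - utld k| ^ 2 :=
          pow_le_pow_left₀ (le_max_right _ _) h1 2
      _ = (up - utld) k ^ 2 := by rw [sq_abs]; rfl
  -- the chain of inequalities gives equality of the two distances
  have hup_le : ‖up - utld‖ ≤ ‖v - utld‖ := hproj v hvU
  have hsq : ‖v - utld‖ ^ 2 ≤ ‖up - utld‖ ^ 2 := by
    rw [hvnorm]; exact le_trans (hmin θ₀) h2
  have heq : ‖v - utld‖ = ‖up - utld‖ := le_antisymm
    (by nlinarith [norm_nonneg (v - utld), norm_nonneg (up - utld)]) hup_le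
  -- midpoint lies in U by convexity
  set m : EuclideanSpace ℝ (Fin K) := (2:ℝ)⁻¹ • (v + up) with hm
  have hmU : ∃ θ, ∀ k, ℓ k θ ≤ m k := by
    refine ⟨(2:ℝ)⁻¹ • θ' + (2:ℝ)⁻¹ • θ₀, fun k => ?_⟩
    have hc := (hconv k).2 (Set.mem_univ θ') (Set.mem_univ θ₀)
      (by norm_num : (0:ℝ) ≤ 2⁻¹) (by norm_num : (0:ℝ) ≤ 2⁻¹) (by norm_num)
    have hmk : m k = (2:ℝ)⁻¹ * (v k + up k) := rfl
    have := hθ₀ k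
    have := le_max_left (ℓ k θ') (utld k)
    rw [hmk]
    calc ℓ k ((2:ℝ)⁻¹ • θ' + (2:ℝ)⁻¹ • θ₀) ≤ (2:ℝ)⁻¹ * ℓ k θ' + (2:ℝ)⁻¹ * ℓ k θ₀ := hc
      _ ≤ (2:ℝ)⁻¹ * (v k + up k) := by rw [hvk k]; nlinarith
  have hmp : ‖up - utld‖ ≤ ‖m - utld‖ := hproj m hmU
  -- parallelogram law forces v = up
  have hpar := parallelogram_law_with_norm ℝ (v - utld) (up - utld)
  have hab : (v - utld) + (up - utld) = (2:ℝ) • (m - utld) := by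
    rw [hm]; module
  have hab2 : ‖(v - utld) + (up - utld)‖ = 2 * ‖m - utld‖ := by
    rw [hab, norm_smul]; simp
  have hdiff2 : (v - utld) - (up - utld) = v - up := by abel
  have hvup : ‖v - up‖ ^ 2 ≤ 0 := by
    have h4 : ‖up - utld‖ ^ 2 ≤ ‖m - utld‖ ^ 2 := by
      nlinarith [norm_nonneg (up - utld), norm_nonneg (m - utld)]
    rw [hdiff2, hab2] at hpar
    nlinarith [hpar, heq, h4]
  have hveq : v = up := by
    have : ‖v - up‖ = 0 := le_antisymm
      (by nlinarith [norm_nonneg (v - up)]) (norm_nonneg _)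
    have := norm_sub_eq_zero_iff.mp this
    exact this
  have hle : ∀ k, u' k ≤ up k := fun k => by
    rw [hu' k, ← hveq, hvk k]; exact le_max_left _ _
  exact ⟨⟨θ', fun k => (hu' k).ge⟩, hle, hmono u' up hle⟩
end

section
/- Let ℓ_k : ℝ^d → ℝ for k = 1, …, K each be γ-smooth (gradient γ-Lipschitz), Φ-Lipschitz, with ‖ℓ(θ)‖ ≤ G for all θ, and let ũ ∈ ℝ^K satisfy |ℓ_k(θ₀) − ũ_k| ≤ G + c for a fixed θ₀ and constant c ≥ 0 and all k. Then Q(θ) := Σ_k (ℓ_k(θ) − ũ_k)₊² has a Lipschitz gradient on the region where |ℓ_k(θ) − ũ_k| ≤ G + c, with Lipschitz constant at most 2K((G + c)γ + Φ²). -/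
open Filter Asymptotics

lemma hasDerivAt_posPart_sq (z : ℝ) :
    HasDerivAt (fun w : ℝ => (max w 0)^2) (2 * max z 0) z := by
  rcases lt_trichotomy z 0 with hz | hz | hz
  · have h : (fun w : ℝ => (max w 0)^2) =ᶠ[nhds z] fun _ => (0:ℝ) := by
      filter_upwards [Iio_mem_nhds hz] with w hw
      simp [max_eq_right (le_of_lt (Set.mem_Iio.mp hw))]
    have := (hasDerivAt_const z (0:ℝ)).congr_of_eventuallyEq h
    simpa [max_eq_right hz.le] using this
  · subst hz
    rw [hasDerivAt_iff_isLittleO]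
    simp only [max_self, mul_zero, smul_zero, sub_zero]
    have h1 : (fun w : ℝ => (max w 0)^2) =O[nhds 0] fun w => w^2 := by
      apply isBigO_of_le
      intro w
      have : |max w 0| ≤ |w| := by
        rcases le_or_gt w 0 with h | h
        · simp [max_eq_right h]
        · simp [max_eq_left h.le]
      simpa [abs_pow] using pow_le_pow_left₀ (abs_nonneg _) this 2
    have h2 : (fun w : ℝ => w^2) =o[nhds 0] fun w => w :=
      isLittleO_pow_id one_lt_two
    simpa using h1.trans_isLittleO h2
  · have h : (fun w : ℝ => (max w 0)^2) =ᶠ[nhds z] fun w => w^2 := by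
      filter_upwards [Ioi_mem_nhds hz] with w hw
      simp [max_eq_left (le_of_lt (Set.mem_Ioi.mp hw))]
    have := (hasDerivAt_pow 2 z).congr_of_eventuallyEq h
    simpa [max_eq_left hz.le, mul_comm] using this

lemma gradQ_formula {d K : ℕ} (ℓ : Fin K → EuclideanSpace ℝ (Fin d) → ℝ)
    (utld : Fin K → ℝ) (hdiff : ∀ k, Differentiable ℝ (ℓ k))
    (Q : EuclideanSpace ℝ (Fin d) → ℝ)
    (hQ : ∀ θ, Q θ = ∑ k, (max (ℓ k θ - utld k) 0) ^ 2)
    (θ : EuclideanSpace ℝ (Fin d)) :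
    HasGradientAt Q (∑ k, (2 * max (ℓ k θ - utld k) 0) • gradient (ℓ k) θ) θ := by
  have hQ' : Q = fun θ => ∑ k, (max (ℓ k θ - utld k) 0) ^ 2 := funext hQ
  rw [hasGradientAt_iff_hasFDerivAt, hQ']
  have hterm : ∀ k : Fin K, HasFDerivAt (fun θ => (max (ℓ k θ - utld k) 0)^2)
      ((2 * max (ℓ k θ - utld k) 0) •
        (InnerProductSpace.toDual ℝ _ (gradient (ℓ k) θ))) θ := by
    intro k
    have h1 : HasFDerivAt (fun θ => ℓ k θ - utld k)
        (InnerProductSpace.toDual ℝ _ (gradient (ℓ k) θ)) θ :=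
      ((hdiff k θ).hasGradientAt.hasFDerivAt).sub_const _
    exact (hasDerivAt_posPart_sq (ℓ k θ - utld k)).comp_hasFDerivAt θ h1
  have hsum := HasFDerivAt.fun_sum (fun k (_ : k ∈ Finset.univ) => hterm k)
  refine hsum.congr_fderiv ?_
  simp [map_sum, map_smul]


/-- for γ-smooth, Φ-Lipschitz surrogates with `‖ℓ(θ)‖ ≤ G`, and `ũ` with
`|ℓ_k(θ₀) − ũ_k| ≤ G + c`, the function `Q(θ) = Σ_k (ℓ_k(θ) − ũ_k)₊²` has a Lipschitz
gradient on the region where `|ℓ_k(θ) − ũ_k| ≤ G + c`, with constant `2K((G + c)γ + Φ²)`. -/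
theorem clipped_penalty_smooth {d K : ℕ}
    (ℓ : Fin K → EuclideanSpace ℝ (Fin d) → ℝ)
    (γ Φ G c : ℝ) (hγ : 0 ≤ γ) (hΦ : 0 ≤ Φ) (hG : 0 ≤ G) (hc : 0 ≤ c)
    (hdiff : ∀ k, Differentiable ℝ (ℓ k))
    (hsmooth : ∀ k x y, ‖gradient (ℓ k) x - gradient (ℓ k) y‖ ≤ γ * ‖x - y‖)
    (hlip : ∀ k x y, |ℓ k x - ℓ k y| ≤ Φ * ‖x - y‖)
    (hbound : ∀ θ, Real.sqrt (∑ k, (ℓ k θ) ^ 2) ≤ G)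
    (utld : Fin K → ℝ) (θ₀ : EuclideanSpace ℝ (Fin d))
    (hθ₀ : ∀ k, |ℓ k θ₀ - utld k| ≤ G + c)
    (Q : EuclideanSpace ℝ (Fin d) → ℝ)
    (hQ : ∀ θ, Q θ = ∑ k, (max (ℓ k θ - utld k) 0) ^ 2) :
    ∀ θ₁ θ₂, (∀ k, |ℓ k θ₁ - utld k| ≤ G + c) → (∀ k, |ℓ k θ₂ - utld k| ≤ G + c) →
      ‖gradient Q θ₁ - gradient Q θ₂‖ ≤ 2 * K * ((G + c) * γ + Φ ^ 2) * ‖θ₁ - θ₂‖ := by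
  intro θ₁ θ₂ h1 h2
  have hgradnorm : ∀ k θ, ‖gradient (ℓ k) θ‖ ≤ Φ := by
    intro k θ
    have hfd := (hdiff k θ).hasGradientAt.hasFDerivAt
    have hle : ‖InnerProductSpace.toDual ℝ _ (gradient (ℓ k) θ)‖ ≤ Φ := by
      apply hfd.le_of_lip' hΦ
      filter_upwards with x
      simpa [Real.norm_eq_abs] using hlip k x θ
    simpa only [LinearIsometryEquiv.norm_map] using hle
  have hg : ∀ θ, gradient Q θ = ∑ k, (2 * max (ℓ k θ - utld k) 0) • gradient (ℓ k) θ :=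
    fun θ => (gradQ_formula ℓ utld hdiff Q hQ θ).gradient
  rw [hg θ₁, hg θ₂, ← Finset.sum_sub_distrib]
  calc ‖∑ k, ((2 * max (ℓ k θ₁ - utld k) 0) • gradient (ℓ k) θ₁
        - (2 * max (ℓ k θ₂ - utld k) 0) • gradient (ℓ k) θ₂)‖
      ≤ ∑ k : Fin K, (2 * ((G + c) * γ + Φ ^ 2) * ‖θ₁ - θ₂‖) := by
        apply norm_sum_le_of_le
        intro k _
        set m₁ := max (ℓ k θ₁ - utld k) 0 with hm₁
        set m₂ := max (ℓ k θ₂ - utld k) 0 with hm₂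
        set v₁ := gradient (ℓ k) θ₁
        set v₂ := gradient (ℓ k) θ₂
        have key : (2 * m₁) • v₁ - (2 * m₂) • v₂
            = (2 * m₁) • (v₁ - v₂) + (2 * (m₁ - m₂)) • v₂ := by
          rw [smul_sub, mul_sub, sub_smul]
          abel
        have hm₁abs : |m₁| ≤ G + c := by
          rw [abs_of_nonneg (le_max_right _ _)]
          exact max_le ((abs_le.mp (h1 k)).2) (by positivity)
        have hmdiff : |m₁ - m₂| ≤ Φ * ‖θ₁ - θ₂‖ := by
          refine le_trans (abs_max_sub_max_le_abs _ _ _) ?_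
          have : ℓ k θ₁ - utld k - (ℓ k θ₂ - utld k) = ℓ k θ₁ - ℓ k θ₂ := by ring
          rw [this]; exact hlip k θ₁ θ₂
        calc ‖(2 * m₁) • v₁ - (2 * m₂) • v₂‖
            ≤ ‖(2 * m₁) • (v₁ - v₂)‖ + ‖(2 * (m₁ - m₂)) • v₂‖ := by
              rw [key]; exact norm_add_le _ _
          _ = 2 * |m₁| * ‖v₁ - v₂‖ + 2 * |m₁ - m₂| * ‖v₂‖ := by
              rw [norm_smul, norm_smul]
              simp [Real.norm_eq_abs, abs_mul, mul_assoc]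
          _ ≤ 2 * (G + c) * (γ * ‖θ₁ - θ₂‖) + 2 * (Φ * ‖θ₁ - θ₂‖) * Φ := by
              gcongr 2 * ?_ * ?_ + 2 * ?_ * ?_
              exacts [hsmooth k θ₁ θ₂, hgradnorm k θ₂]
          _ = 2 * ((G + c) * γ + Φ ^ 2) * ‖θ₁ - θ₂‖ := by ring
    _ = 2 * K * ((G + c) * γ + Φ ^ 2) * ‖θ₁ - θ₂‖ := by
        rw [Finset.sum_const, Finset.card_univ, Fintype.card_fin, nsmul_eq_mul]
        ring
end

section
/- Let U ⊆ ℝ^K be closed convex, u ∈ U, η > 0, α ≥ 0, and g ∈ ℝ^K. Let ũ⁺ ∈ U be an α/η-approximate minimizer over U of F(z) = ⟨g, z⟩ + (1/(2η))‖z − u‖², and define the approximate gradient mapping P̃(u, g) = (u − ũ⁺)/η. Then ⟨g, P̃(u, g)⟩ ≥ (3/4)‖P̃(u, g)‖² − 2α/η². -/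
open scoped RealInnerProductSpace

/-- for an `α/η`-approximate minimizer `ũ⁺ ∈ U` of
`F(z) = ⟨g, z⟩ + (1/(2η))‖z − u‖²` over the closed convex set `U`, the approximate gradient
mapping `P̃(u, g) = (u − ũ⁺)/η` satisfies `⟨g, P̃(u, g)⟩ ≥ (3/4)‖P̃(u, g)‖² − 2α/η²`. -/
theorem approx_gradient_mapping_inner_bound {K : ℕ}
    (U : Set (EuclideanSpace ℝ (Fin K))) (hUclosed : IsClosed U) (hUconv : Convex ℝ U)
    (u : EuclideanSpace ℝ (Fin K)) (hu : u ∈ U)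
    (η α : ℝ) (hη : 0 < η) (hα : 0 ≤ α)
    (g : EuclideanSpace ℝ (Fin K))
    (F : EuclideanSpace ℝ (Fin K) → ℝ)
    (hF : ∀ z, F z = ⟪g, z⟫ + (1 / (2 * η)) * ‖z - u‖ ^ 2)
    (utldp : EuclideanSpace ℝ (Fin K)) (hutldp : utldp ∈ U)
    (happrox : ∀ z ∈ U, F utldp ≤ F z + α / η) :
    ⟪g, η⁻¹ • (u - utldp)⟫ ≥ (3 / 4) * ‖η⁻¹ • (u - utldp)‖ ^ 2 - 2 * α / η ^ 2 := by
  have h2η : (0:ℝ) < 2 * η := by positivity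
  -- exact minimizer: projection of `u - η • g` onto `U`
  obtain ⟨v, hvU, hvmin⟩ :=
    exists_norm_eq_iInf_of_complete_convex ⟨u, hu⟩ hUclosed.isComplete hUconv (u - η • g)
  have hproj : ∀ z ∈ U, ⟪(u - η • g) - v, z - v⟫ ≤ 0 :=
    (norm_eq_iInf_iff_real_inner_le_zero hUconv hvU).mp hvmin
  -- F scaled by 2η, division-free
  have hFe : ∀ z, 2 * η * F z = 2 * η * ⟪g, z⟫ + ‖z - u‖ ^ 2 := by
    intro z; rw [hF z]; field_simp
  -- strong optimality of v (scaled by 2η)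
  have hstrong : ∀ z ∈ U, 2 * η * F v + ‖z - v‖ ^ 2 ≤ 2 * η * F z := by
    intro z hz
    have hp := hproj z hz
    have h1 : (u - η • g) - v = (u - v) - η • g := by abel
    rw [h1, inner_sub_left, real_inner_smul_left] at hp
    have hgzv : ⟪g, z - v⟫ = ⟪g, z⟫ - ⟪g, v⟫ := inner_sub_right _ _ _
    rw [hgzv] at hp
    have hsplit : ‖z - u‖ ^ 2 = ‖z - v‖ ^ 2 + 2 * ⟪z - v, v - u⟫ + ‖v - u‖ ^ 2 := by
      have h : z - u = (z - v) + (v - u) := by abel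
      rw [h, @norm_add_sq_real]
    have hswap : ⟪z - v, v - u⟫ = -⟪u - v, z - v⟫ := by
      rw [real_inner_comm]
      have h : v - u = -(u - v) := by abel
      rw [h, inner_neg_left]
    rw [hFe z, hFe v, hsplit, hswap]
    nlinarith [hp]
  -- scaled approximate optimality
  have happrox2 : ∀ z ∈ U, 2 * η * F utldp ≤ 2 * η * F z + 2 * α := by
    intro z hz
    have h := mul_le_mul_of_nonneg_left (happrox z hz) h2η.le
    have e : 2 * η * (F z + α / η) = 2 * η * F z + 2 * α := by field_simp
    linarith [e ▸ h]
  have A1 := hstrong u hu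
  have A2 := happrox2 v hvU
  have A3 := hstrong utldp hutldp
  -- ‖utldp - v‖² ≤ 2α
  have hn3 : ‖utldp - v‖ ^ 2 ≤ 2 * α := by linarith
  -- triangle inequality for squares
  have htri : ‖utldp - u‖ ^ 2 ≤ 2 * ‖utldp - v‖ ^ 2 + 2 * ‖v - u‖ ^ 2 := by
    have h : utldp - u = (utldp - v) + (v - u) := by abel
    rw [h, @norm_add_sq_real]
    nlinarith [real_inner_le_norm (utldp - v) (v - u), sq_nonneg (‖utldp - v‖ - ‖v - u‖)]
  have hnormvu : ‖v - u‖ = ‖u - v‖ := norm_sub_rev _ _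
  rw [hnormvu] at htri
  -- main scaled inequality
  have huu : ‖u - u‖ ^ 2 = 0 := by simp
  have hFu := hFe u
  have hFut := hFe utldp
  have hFv := hFe v
  rw [huu] at hFu
  have hmain : 4 * η * (⟪g, u⟫ - ⟪g, utldp⟫) ≥ 3 * ‖utldp - u‖ ^ 2 - 8 * α := by
    nlinarith [A1, A2, hn3, htri, hFu, hFut]
  -- convert to the stated goal
  have hgdiff : ⟪g, u⟫ - ⟪g, utldp⟫ = ⟪g, u - utldp⟫ := (inner_sub_right _ _ _).symm
  have hnorm2 : ‖u - utldp‖ = ‖utldp - u‖ := norm_sub_rev _ _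
  have habs : ‖(η⁻¹ : ℝ)‖ = η⁻¹ := by
    rw [Real.norm_eq_abs, abs_of_pos (by positivity)]
  rw [real_inner_smul_right, norm_smul, habs, mul_pow, hnorm2, ← hgdiff]
  rw [ge_iff_le, ← sub_nonneg]
  have e : η⁻¹ * (⟪g, u⟫ - ⟪g, utldp⟫) -
      (3 / 4 * (η⁻¹ ^ 2 * ‖utldp - u‖ ^ 2) - 2 * α / η ^ 2) =
      (4 * η * (⟪g, u⟫ - ⟪g, utldp⟫) - (3 * ‖utldp - u‖ ^ 2 - 8 * α)) / (4 * η ^ 2) := by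
    field_simp; ring
  rw [e]
  apply div_nonneg (by linarith) (by positivity)
end
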